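/- The function d_w on Σ^∞ defined by d_w(x,y) = 2^{-ℓ(x⊓y)} - 2^{-ℓ(x)} is a quasi-metric on Σ^∞, and d_w(x,y) = 0 if and only if x is a prefix of y. -/

import Mathlib

open scoped NNReal ENNReal

attribute [local instance] Classical.propDecidable

universe u

structure QuasiMetric (X : Type u) where
  d : X → X → ℝ≥0
  eq_iff : ∀ x y, (d x y = 0 ∧ d y x = 0) ↔ x = y
  triangle : ∀ x y z, d x y ≤ d x z + d z y

/-- The order on formal balls: `(x,r) ⊑ (y,s)` iff `d x y ≤ r - s` (real subtraction). -/
def BallLE {X : Type u} (d : X → X → ℝ≥0) (b c : X × ℝ≥0) : Prop :=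
  (d b.1 c.1 : ℝ) ≤ (b.2 : ℝ) - (c.2 : ℝ)

def IsUpperBound {β : Type*} (le : β → β → Prop) (D : Set β) (u : β) : Prop :=
  ∀ a ∈ D, le a u

def IsLub' {β : Type*} (le : β → β → Prop) (D : Set β) (u : β) : Prop :=
  IsUpperBound le D u ∧ ∀ v, IsUpperBound le D v → le u v

def DirectedSubset {β : Type*} (le : β → β → Prop) (D : Set β) : Prop :=
  D.Nonempty ∧ ∀ a ∈ D, ∀ b ∈ D, ∃ c ∈ D, le a c ∧ le b c

/-- `a` is way below `b`. -/
def WayBelow {β : Type*} (le : β → β → Prop) (a b : β) : Prop :=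
  ∀ D : Set β, DirectedSubset le D → ∀ s, IsLub' le D s → le b s → ∃ u ∈ D, le a u

def LeftKCauchyNet {X : Type u} {Λ : Type*} (d : X → X → ℝ≥0) (le : Λ → Λ → Prop)
    (f : Λ → X) : Prop :=
  ∀ ε : ℝ≥0, 0 < ε → ∃ a, ∀ b c, le a b → le b c → d (f b) (f c) < ε

/-- `x` is a Yoneda-limit of the net `f`: for all `y`, `d x y = inf_a sup_{b ≥ a} d (f b) y`
(computed in `ℝ≥0∞` so that the inf/sup always exist). -/
def IsYonedaLimit {X : Type u} {Λ : Type*} (d : X → X → ℝ≥0) (le : Λ → Λ → Prop)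
    (f : Λ → X) (x : X) : Prop :=
  ∀ y, (d x y : ℝ≥0∞) = ⨅ a : Λ, ⨆ b : Λ, ⨆ _ : le a b, (d (f b) y : ℝ≥0∞)

/-- Finite and infinite words over `α`: partial functions on `ℕ` with downward-closed domain. -/
def Word (α : Type u) : Type u := {f : ℕ → Option α // ∀ n, f n = none → f (n + 1) = none}

def emptyWord (α : Type u) : Word α := ⟨fun _ => none, fun _ _ => rfl⟩

/-- The prefix order on words. -/
def wpre {α : Type u} (x y : Word α) : Prop := ∀ n a, x.1 n = some a → y.1 n = some a

/-- The length of a word, in `ℕ∞`. -/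
noncomputable def wlen {α : Type u} (x : Word α) : ℕ∞ := ⨅ n ∈ {n : ℕ | x.1 n = none}, (n : ℕ∞)

/-- `pw n = 2^{-n}`, with `2^{-∞} = 0`. -/
noncomputable def pw (n : ℕ∞) : ℝ≥0 := if n = ⊤ then 0 else (2 : ℝ≥0)⁻¹ ^ n.toNat

/-- The balanced quasi-metric on words. -/
noncomputable def qb {α : Type u} (x y : Word α) : ℝ≥0 :=
  if wpre x y then pw (wlen x) - pw (wlen y) else 1

/-- The longest common prefix of two words. -/
noncomputable def wmeet {α : Type u} (x y : Word α) : Word α :=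
  ⟨fun n => if ∀ k ≤ n, x.1 k = y.1 k then x.1 n else none, by
    intro n hn
    dsimp only at hn ⊢
    by_cases h : ∀ k ≤ n + 1, x.1 k = y.1 k
    · have h' : ∀ k ≤ n, x.1 k = y.1 k := fun k hk => h k (le_trans hk (Nat.le_succ n))
      rw [if_pos h'] at hn
      rw [if_pos h]
      exact x.2 n hn
    · rw [if_neg h]⟩

noncomputable def dw {α : Type u} (x y : Word α) : ℝ≥0 :=
  pw (wlen (wmeet x y)) - pw (wlen x)

lemma word_none_mono {α : Type u} (x : Word α) {m n : ℕ} (h : m ≤ n) (hm : x.1 m = none) :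
    x.1 n = none := by
  induction n, h using Nat.le_induction with
  | base => exact hm
  | succ n hmn ih => exact x.2 n ih

lemma wlen_le_iff {α : Type u} (x : Word α) (n : ℕ) : wlen x ≤ (n : ℕ∞) ↔ x.1 n = none := by
  constructor
  · intro h
    by_contra hx
    have h2 : (n : ℕ∞) + 1 ≤ wlen x := by
      refine le_iInf₂ fun m hm => ?_
      have hnm : n < m := by
        by_contra hnm
        exact hx (word_none_mono x (not_lt.1 hnm) hm)
      exact_mod_cast hnm
    have := h2.trans h
    exact absurd this (by exact_mod_cast Nat.not_succ_le_self n)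
  · intro h
    exact iInf₂_le n h

lemma lt_wlen_iff {α : Type u} (x : Word α) (n : ℕ) : (n : ℕ∞) < wlen x ↔ x.1 n ≠ none := by
  rw [lt_iff_not_ge, not_iff_not]
  exact wlen_le_iff x n

lemma pw_pos {n : ℕ∞} (h : n ≠ ⊤) : 0 < pw n := by
  rw [pw, if_neg h]
  positivity

lemma pw_lt_pw {m n : ℕ∞} (h : m < n) : pw n < pw m := by
  have hm : m ≠ ⊤ := ne_top_of_lt h
  by_cases hn : n = ⊤
  · rw [pw, if_pos hn]
    exact pw_pos hm
  · rw [pw, if_neg hn, pw, if_neg hm]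
    apply pow_lt_pow_right_of_lt_one₀ (by norm_num) (by rw [← NNReal.coe_lt_coe]; norm_num)
    have : m.toNat < n.toNat := by
      lift m to ℕ using hm
      lift n to ℕ using hn
      simpa using h
    exact this

lemma pw_le_pw {m n : ℕ∞} (h : m ≤ n) : pw n ≤ pw m := by
  rcases h.lt_or_eq with h' | rfl
  · exact (pw_lt_pw h').le
  · rfl

lemma wmeet_apply {α : Type u} (x y : Word α) (n : ℕ) :
    (wmeet x y).1 n = if ∀ k ≤ n, x.1 k = y.1 k then x.1 n else none := rfl

lemma wmeet_comm {α : Type u} (x y : Word α) : wmeet x y = wmeet y x := by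
  apply Subtype.ext
  funext n
  rw [wmeet_apply, wmeet_apply]
  by_cases h : ∀ k ≤ n, x.1 k = y.1 k
  · rw [if_pos h, if_pos (fun k hk => (h k hk).symm), h n le_rfl]
  · rw [if_neg h, if_neg (fun h' => h fun k hk => (h' k hk).symm)]

lemma wlen_wmeet_le {α : Type u} (x y : Word α) : wlen (wmeet x y) ≤ wlen x := by
  refine le_iInf₂ fun n hn => ?_
  refine le_trans ((wlen_le_iff _ n).2 ?_) le_rfl
  rw [wmeet_apply]
  split_ifs with h
  · exact hn
  · rfl

lemma wpre_wmeet_eq {α : Type u} {x y : Word α} (h : wpre x y) : wmeet x y = x := by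
  apply Subtype.ext
  funext n
  rw [wmeet_apply]
  split_ifs with hc
  · rfl
  · push_neg at hc
    obtain ⟨k, hk, hne⟩ := hc
    cases hxk : x.1 k with
    | none => exact (word_none_mono x hk hxk).symm
    | some a => exact absurd (hxk.trans (h k a hxk).symm) hne

lemma dw_eq_zero_iff {α : Type u} (x y : Word α) : dw x y = 0 ↔ wpre x y := by
  rw [dw, tsub_eq_zero_iff_le]
  constructor
  · intro h
    have hle := wlen_wmeet_le x y
    have heq : wlen (wmeet x y) = wlen x := by
      rcases hle.lt_or_eq with hlt | he
      · exact absurd h (not_le.2 (pw_lt_pw hlt))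
      · exact he
    intro n a ha
    have hn : (n : ℕ∞) < wlen x := (lt_wlen_iff x n).2 (by simp [ha])
    have hm : (wmeet x y).1 n ≠ none := (lt_wlen_iff _ n).1 (heq ▸ hn)
    rw [wmeet_apply] at hm
    split_ifs at hm with hc
    · exact hc n le_rfl ▸ ha
    · exact absurd rfl hm
  · intro h
    rw [wpre_wmeet_eq h]

lemma wlen_min_le_wmeet {α : Type u} (x y z : Word α) :
    min (wlen (wmeet x z)) (wlen (wmeet z y)) ≤ wlen (wmeet x y) := by
  by_contra hcon
  push_neg at hcon
  have hn : wlen (wmeet x y) ≠ ⊤ := ne_top_of_lt hcon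
  set n := (wlen (wmeet x y)).toNat with hndef
  have hcast : (n : ℕ∞) = wlen (wmeet x y) := ENat.coe_toNat hn
  have hnone : (wmeet x y).1 n = none := (wlen_le_iff _ n).1 (by rw [hcast])
  have h1 : (wmeet x z).1 n ≠ none :=
    (lt_wlen_iff _ n).1 (by rw [hcast]; exact hcon.trans_le (min_le_left _ _))
  have h2 : (wmeet z y).1 n ≠ none :=
    (lt_wlen_iff _ n).1 (by rw [hcast]; exact hcon.trans_le (min_le_right _ _))
  rw [wmeet_apply] at h1 h2
  split_ifs at h1 with hc1
  · split_ifs at h2 with hc2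
    · have hc : ∀ k ≤ n, x.1 k = y.1 k := fun k hk => (hc1 k hk).trans (hc2 k hk)
      rw [wmeet_apply, if_pos hc] at hnone
      exact h1 hnone
    · exact h2 rfl
  · exact h1 rfl

theorem stmt18 {α : Type u} :
    (∀ x y : Word α, (dw x y = 0 ∧ dw y x = 0) ↔ x = y) ∧
    (∀ x y z : Word α, dw x y ≤ dw x z + dw z y) ∧
    (∀ x y : Word α, dw x y = 0 ↔ wpre x y) := by
  refine ⟨?_, ?_, dw_eq_zero_iff⟩
  · intro x y
    rw [dw_eq_zero_iff, dw_eq_zero_iff]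
    constructor
    · rintro ⟨h1, h2⟩
      apply Subtype.ext
      funext n
      cases hx : x.1 n with
      | none =>
        cases hy : y.1 n with
        | none => rfl
        | some a => exact absurd (h2 n a hy) (by simp [hx])
      | some a => exact (h1 n a hx).symm
    · rintro rfl
      exact ⟨fun n a h => h, fun n a h => h⟩
  · intro x y z
    have hxz := wlen_wmeet_le x z
    have hxy := wlen_wmeet_le x y
    have hz1 : wlen (wmeet x z) ≤ wlen z := by
      rw [wmeet_comm]; exact wlen_wmeet_le z x
    have hz2 := wlen_wmeet_le z y
    have hmin := wlen_min_le_wmeet x y z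
    have p1 : pw (wlen x) ≤ pw (wlen (wmeet x z)) := pw_le_pw hxz
    have p2 : pw (wlen x) ≤ pw (wlen (wmeet x y)) := pw_le_pw hxy
    have p3 : pw (wlen z) ≤ pw (wlen (wmeet z y)) := pw_le_pw hz2
    have p4 : pw (wlen z) ≤ pw (wlen (wmeet x z)) := pw_le_pw hz1
    have key : pw (wlen (wmeet x y)) + pw (wlen z)
        ≤ pw (wlen (wmeet x z)) + pw (wlen (wmeet z y)) := by
      rcases le_total (wlen (wmeet x z)) (wlen (wmeet z y)) with hc | hc
      · exact add_le_add (pw_le_pw (min_eq_left hc ▸ hmin)) p3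
      · exact (add_le_add (pw_le_pw (min_eq_right hc ▸ hmin)) p4).trans_eq (add_comm _ _)
    rw [dw, dw, dw, ← NNReal.coe_le_coe, NNReal.coe_add, NNReal.coe_sub p2,
      NNReal.coe_sub p1, NNReal.coe_sub p3]
    have keyR := NNReal.coe_le_coe.2 key
    push_cast at keyR
    linarith
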